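/- Let p be a prime with p ≡ 1 (mod 4), and let c, d be integers with p^2 = c^2 + 4d^2 and gcd(c, p) = 1. Define c_1 = c, d_1 = d, c_{ℓ+1} = c_1·c_ℓ − 4·d_1·d_ℓ, d_{ℓ+1} = c_1·d_ℓ + d_1·c_ℓ. Then gcd(c_ℓ, p) = 1 for all ℓ ≥ 1. -/

import Mathlib

theorem stmt_7 (p : ℕ) (hp : p.Prime) (hp4 : p % 4 = 1) (c d : ℤ)
    (hcd : (p : ℤ) ^ 2 = c ^ 2 + 4 * d ^ 2) (hcop : Int.gcd c (p : ℤ) = 1)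
    (C D : ℕ → ℤ) (hC1 : C 1 = c) (hD1 : D 1 = d)
    (hCr : ∀ ℓ, 1 ≤ ℓ → C (ℓ + 1) = c * C ℓ - 4 * d * D ℓ)
    (hDr : ∀ ℓ, 1 ≤ ℓ → D (ℓ + 1) = c * D ℓ + d * C ℓ) :
    ∀ ℓ, 1 ≤ ℓ → Int.gcd (C ℓ) (p : ℤ) = 1 := by
  haveI : Fact p.Prime := ⟨hp⟩
  -- get i with i^2 = -1 in ZMod p
  have hsq : IsSquare (-1 : ZMod p) := by
    rw [ZMod.exists_sq_eq_neg_one_iff]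
    omega
  obtain ⟨i, hi⟩ := hsq
  have hi2 : i * i = -1 := hi.symm
  -- 2 ≠ 0 in ZMod p
  have hp2 : p ≠ 2 := by omega
  have h2 : (2 : ZMod p) ≠ 0 := by
    intro h
    have hd : (p : ℕ) ∣ 2 := (ZMod.natCast_eq_zero_iff 2 p).mp (by exact_mod_cast h)
    have := Nat.le_of_dvd (by norm_num) hd
    have := hp.two_le
    omega
  -- c ≠ 0 in ZMod p
  have hcne : ((c : ZMod p) : ZMod p) ≠ 0 := by
    intro h
    have hdvd : (p : ℤ) ∣ c := (ZMod.intCast_zmod_eq_zero_iff_dvd c p).mp h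
    have : (p : ℤ) ∣ (Int.gcd c (p : ℤ) : ℤ) := Int.dvd_coe_gcd hdvd dvd_rfl
    rw [hcop] at this
    have := Int.le_of_dvd one_pos this
    have := hp.two_le
    omega
  set a : ZMod p := (c : ZMod p) + 2 * i * (d : ZMod p) with ha
  set b : ZMod p := (c : ZMod p) - 2 * i * (d : ZMod p) with hb
  have hab : a * b = 0 := by
    have hc2 : ((c : ZMod p)) ^ 2 + 4 * (d : ZMod p) ^ 2 = 0 := by
      have : ((p : ℤ) ^ 2 : ℤ) = c ^ 2 + 4 * d ^ 2 := hcd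
      have := congrArg (fun z : ℤ => (z : ZMod p)) this
      push_cast at this
      rw [ZMod.natCast_self] at this
      simpa using this.symm
    rw [ha, hb]
    linear_combination hc2 - 4 * (d : ZMod p)^2 * hi2
  have habne : a + b ≠ 0 := by
    intro h
    apply hcne
    have : (2 : ZMod p) * (c : ZMod p) = 0 := by rw [ha, hb] at h; linear_combination h
    rcases mul_eq_zero.mp this with h' | h'
    · exact absurd h' h2
    · exact h'
  -- key induction
  have key : ∀ ℓ, 1 ≤ ℓ → ((C ℓ : ZMod p) + 2 * i * (D ℓ : ZMod p) = a ^ ℓ ∧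
      (C ℓ : ZMod p) - 2 * i * (D ℓ : ZMod p) = b ^ ℓ) := by
    intro ℓ hℓ
    induction ℓ, hℓ using Nat.le_induction with
    | base => rw [hC1, hD1]; constructor <;> ring
    | succ n hn ih =>
      obtain ⟨ih1, ih2⟩ := ih
      have e1 := hCr n hn
      have e2 := hDr n hn
      constructor
      · rw [e1, e2]
        push_cast
        rw [pow_succ, ← ih1, ha]
        linear_combination (-4 * (d : ZMod p) * (D n : ZMod p)) * hi2
      · rw [e1, e2]
        push_cast
        rw [pow_succ, ← ih2, hb]
        linear_combination (-4 * (d : ZMod p) * (D n : ZMod p)) * hi2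
  intro ℓ hℓ
  obtain ⟨k1, k2⟩ := key ℓ hℓ
  -- show C ℓ ≠ 0 mod p
  have hCne : ((C ℓ : ZMod p)) ≠ 0 := by
    have hsum : (2 : ZMod p) * (C ℓ : ZMod p) = a ^ ℓ + b ^ ℓ := by
      linear_combination k1 + k2
    rcases mul_eq_zero.mp hab with h0 | h0
    · -- a = 0, so b ≠ 0
      have hbne : b ≠ 0 := by intro h; exact habne (by rw [h0, h]; ring)
      intro h
      rw [h, mul_zero] at hsum
      have ha0 : a ^ ℓ = 0 := by rw [h0]; exact zero_pow (by omega)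
      rw [ha0] at hsum
      have : b ^ ℓ = 0 := by simpa using hsum.symm
      exact hbne (pow_eq_zero_iff (by omega) |>.mp this)
    · have hane : a ≠ 0 := by intro h; exact habne (by rw [h0, h]; ring)
      intro h
      rw [h, mul_zero] at hsum
      have hb0 : b ^ ℓ = 0 := by rw [h0]; exact zero_pow (by omega)
      rw [hb0] at hsum
      have : a ^ ℓ = 0 := by simpa using hsum.symm
      exact hane (pow_eq_zero_iff (by omega) |>.mp this)
  -- conclude gcd = 1
  have hdvd : (Int.gcd (C ℓ) (p : ℤ)) ∣ p := by
    have h := (Int.gcd_dvd_right _ _ : ((Int.gcd (C ℓ) (p : ℤ)) : ℤ) ∣ (p : ℤ))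
    exact_mod_cast h
  rcases (Nat.Prime.eq_one_or_self_of_dvd hp _ hdvd) with h | h
  · exact h
  · exfalso
    apply hCne
    have : (p : ℤ) ∣ C ℓ := by
      have h' := (Int.gcd_dvd_left _ _ : ((Int.gcd (C ℓ) (p : ℤ)) : ℤ) ∣ C ℓ)
      rw [h] at h'
      exact h'
    exact (ZMod.intCast_zmod_eq_zero_iff_dvd _ p).mpr this
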